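/- If the output Q̂ of MSBO satisfies the policy-loss bound via its Bellman residual, then max_{π ∈ Π_Q} J(π) − J(π_{Q̂}) ≤ (2√C_eff/(1-γ)) · ‖Q̂ − TQ̂‖_{2,μ}, where C_eff := max_{π ∈ Π_Q} ‖w_π‖²_{2,μ}. -/

import Mathlib

open scoped BigOperators

/-- Time-`t` state-action marginal distribution of a policy in a finite MDP. -/
noncomputable def marg {S A : Type*} [Fintype S] [Fintype A]
    (d0 : S → ℝ) (P : S → A → S → ℝ) (pol : S → A → ℝ) : ℕ → S → A → ℝ
  | 0 => fun s a => d0 s * pol s a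
  | (t + 1) => fun s' a' => (∑ s, ∑ a, marg d0 P pol t s a * P s a s') * pol s' a'

/-- Normalized discounted state-action occupancy `d_π(s,a)`. -/
noncomputable def occ {S A : Type*} [Fintype S] [Fintype A]
    (γ : ℝ) (d0 : S → ℝ) (P : S → A → S → ℝ) (pol : S → A → ℝ) (s : S) (a : A) : ℝ :=
  (1 - γ) * ∑' t : ℕ, γ ^ t * marg d0 P pol t s a

/-- Expected discounted return `J(π)`. -/
noncomputable def Jret {S A : Type*} [Fintype S] [Fintype A]
    (γ : ℝ) (d0 : S → ℝ) (P : S → A → S → ℝ) (R : S → A → ℝ) (pol : S → A → ℝ) : ℝ :=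
  ∑' t : ℕ, γ ^ t * ∑ s, ∑ a, marg d0 P pol t s a * R s a

/-- Bellman optimality operator `(T Q)(s,a) = R(s,a) + γ Σ_{s'} P(s'|s,a) max_{a'} Q(s',a')`. -/
noncomputable def bellmanT {S A : Type*} [Fintype S] [Fintype A] [Nonempty A]
    (γ : ℝ) (P : S → A → S → ℝ) (R : S → A → ℝ) (Q : S → A → ℝ) (s : S) (a : A) : ℝ :=
  R s a + γ * ∑ s', P s a s' * (⨆ a', Q s' a')

/-- A deterministic policy viewed as a stochastic policy. -/
noncomputable def detPol {S A : Type*} [DecidableEq A] (g : S → A) : S → A → ℝ :=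
  fun s a => if a = g s then 1 else 0
section aux
variable {S A : Type*} [Fintype S] [Fintype A]
variable {γ : ℝ} {d0 : S → ℝ} {P : S → A → S → ℝ} {pol : S → A → ℝ}

lemma marg_nonneg (hd0 : ∀ s, 0 ≤ d0 s) (hP : ∀ s a s', 0 ≤ P s a s')
    (hpol : ∀ s a, 0 ≤ pol s a) : ∀ t s a, 0 ≤ marg d0 P pol t s a := by
  intro t
  induction t with
  | zero => intro s a; exact mul_nonneg (hd0 s) (hpol s a)
  | succ t ih =>
    intro s a
    exact mul_nonneg (Finset.sum_nonneg fun s' _ => Finset.sum_nonneg fun a' _ =>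
      mul_nonneg (ih s' a') (hP s' a' s)) (hpol s a)

lemma marg_sum (hd0sum : ∑ s, d0 s = 1) (hPsum : ∀ s a, ∑ s', P s a s' = 1)
    (hpolsum : ∀ s, ∑ a, pol s a = 1) :
    ∀ t, ∑ s, ∑ a, marg d0 P pol t s a = 1 := by
  intro t
  induction t with
  | zero =>
    simp only [marg, ← Finset.mul_sum, hpolsum, mul_one, hd0sum]
  | succ t ih =>
    simp only [marg, ← Finset.mul_sum, hpolsum, mul_one]
    rw [Finset.sum_comm]
    calc ∑ s, ∑ s', ∑ a, marg d0 P pol t s a * P s a s'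
        = ∑ s, ∑ a, marg d0 P pol t s a * ∑ s', P s a s' := by
          congr 1; ext s; rw [Finset.sum_comm]; simp [Finset.mul_sum]
      _ = 1 := by simp only [hPsum, mul_one, ih]

lemma marg_le_one (hd0 : ∀ s, 0 ≤ d0 s) (hP : ∀ s a s', 0 ≤ P s a s')
    (hpol : ∀ s a, 0 ≤ pol s a) (hd0sum : ∑ s, d0 s = 1)
    (hPsum : ∀ s a, ∑ s', P s a s' = 1) (hpolsum : ∀ s, ∑ a, pol s a = 1)
    (t : ℕ) (s : S) (a : A) : marg d0 P pol t s a ≤ 1 := by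
  have h1 := marg_sum hd0sum hPsum hpolsum (d0 := d0) (P := P) (pol := pol) t
  calc marg d0 P pol t s a ≤ ∑ a, marg d0 P pol t s a :=
        Finset.single_le_sum (fun a' _ => marg_nonneg hd0 hP hpol t s a') (Finset.mem_univ a)
    _ ≤ ∑ s, ∑ a, marg d0 P pol t s a :=
        Finset.single_le_sum (fun s' _ => Finset.sum_nonneg fun a' _ =>
          marg_nonneg hd0 hP hpol t s' a') (Finset.mem_univ s)
    _ = 1 := h1

end aux

section aux2
variable {S A : Type*} [Fintype S] [Fintype A]
variable {γ : ℝ} {d0 : S → ℝ} {P : S → A → S → ℝ} {pol : S → A → ℝ}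

lemma summable_marg (hγ0 : 0 ≤ γ) (hγ1 : γ < 1) (hd0 : ∀ s, 0 ≤ d0 s)
    (hP : ∀ s a s', 0 ≤ P s a s') (hpol : ∀ s a, 0 ≤ pol s a)
    (hd0sum : ∑ s, d0 s = 1) (hPsum : ∀ s a, ∑ s', P s a s' = 1)
    (hpolsum : ∀ s, ∑ a, pol s a = 1) (h : S → A → ℝ) :
    Summable (fun t : ℕ => γ ^ t * ∑ s, ∑ a, marg d0 P pol t s a * h s a) := by
  apply Summable.of_norm_bounded (g := fun t : ℕ => γ ^ t * ∑ s, ∑ a, |h s a|)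
    ((summable_geometric_of_lt_one hγ0 hγ1).mul_right _)
  intro t
  rw [Real.norm_eq_abs, abs_mul, abs_pow, abs_of_nonneg hγ0]
  apply mul_le_mul_of_nonneg_left _ (pow_nonneg hγ0 t)
  calc |∑ s, ∑ a, marg d0 P pol t s a * h s a|
      ≤ ∑ s, ∑ a, |marg d0 P pol t s a * h s a| := by
        refine (Finset.abs_sum_le_sum_abs _ _).trans ?_
        exact Finset.sum_le_sum fun s _ => Finset.abs_sum_le_sum_abs _ _
    _ ≤ ∑ s, ∑ a, |h s a| := by
        refine Finset.sum_le_sum fun s _ => Finset.sum_le_sum fun a _ => ?_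
        rw [abs_mul, abs_of_nonneg (marg_nonneg hd0 hP hpol t s a)]
        calc marg d0 P pol t s a * |h s a| ≤ 1 * |h s a| :=
              mul_le_mul_of_nonneg_right
                (marg_le_one hd0 hP hpol hd0sum hPsum hpolsum t s a) (abs_nonneg _)
          _ = |h s a| := one_mul _

/-- expectation recursion -/
lemma marg_step (Q : S → A → ℝ) (t : ℕ) :
    ∑ s', ∑ a', marg d0 P pol (t+1) s' a' * Q s' a'
      = ∑ s, ∑ a, marg d0 P pol t s a *
          ∑ s', P s a s' * ∑ a', pol s' a' * Q s' a' := by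
  have key : ∀ (W : S → ℝ),
      ∑ s', (∑ s, ∑ a, marg d0 P pol t s a * P s a s') * W s'
        = ∑ s, ∑ a, marg d0 P pol t s a * ∑ s', P s a s' * W s' := by
    intro W
    simp only [Finset.sum_mul, Finset.mul_sum, mul_assoc]
    rw [Finset.sum_comm]
    refine Finset.sum_congr rfl fun s _ => ?_
    rw [Finset.sum_comm]
  calc ∑ s', ∑ a', marg d0 P pol (t+1) s' a' * Q s' a'
      = ∑ s', (∑ s, ∑ a, marg d0 P pol t s a * P s a s') * ∑ a', pol s' a' * Q s' a' := by
        simp only [marg, Finset.mul_sum, mul_assoc]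
    _ = _ := key _

end aux2

section aux3
variable {S A : Type*} [Fintype S] [Fintype A]
variable {γ : ℝ} {d0 : S → ℝ} {P : S → A → S → ℝ} {pol : S → A → ℝ}

lemma telescope (hγ0 : 0 ≤ γ) (hγ1 : γ < 1) (hd0 : ∀ s, 0 ≤ d0 s)
    (hP : ∀ s a s', 0 ≤ P s a s') (hpol : ∀ s a, 0 ≤ pol s a)
    (hd0sum : ∑ s, d0 s = 1) (hPsum : ∀ s a, ∑ s', P s a s' = 1)
    (hpolsum : ∀ s, ∑ a, pol s a = 1) (R Q : S → A → ℝ) :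
    ∑' t : ℕ, γ^t * ∑ s, ∑ a, marg d0 P pol t s a *
      (Q s a - (R s a + γ * ∑ s', P s a s' * ∑ a', pol s' a' * Q s' a'))
    = (∑ s, ∑ a, marg d0 P pol 0 s a * Q s a)
      - ∑' t : ℕ, γ^t * ∑ s, ∑ a, marg d0 P pol t s a * R s a := by
  set K : S → A → ℝ := fun s a => ∑ s', P s a s' * ∑ a', pol s' a' * Q s' a' with hK
  set Av : ℕ → ℝ := fun t => γ^t * ∑ s, ∑ a, marg d0 P pol t s a * Q s a with hAv
  set B : ℕ → ℝ := fun t => γ^t * ∑ s, ∑ a, marg d0 P pol t s a * R s a with hB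
  have hAs : Summable Av := summable_marg hγ0 hγ1 hd0 hP hpol hd0sum hPsum hpolsum Q
  have hBs : Summable B := summable_marg hγ0 hγ1 hd0 hP hpol hd0sum hPsum hpolsum R
  have hA1 : Summable (fun t => Av (t+1)) := (summable_nat_add_iff 1).mpr hAs
  have hterm : ∀ t : ℕ, γ^t * ∑ s, ∑ a, marg d0 P pol t s a *
      (Q s a - (R s a + γ * K s a)) = Av t - B t - Av (t+1) := by
    intro t
    have hs := marg_step (d0 := d0) (P := P) (pol := pol) Q t
    have expand : ∑ s, ∑ a, marg d0 P pol t s a * (Q s a - (R s a + γ * K s a))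
        = (∑ s, ∑ a, marg d0 P pol t s a * Q s a)
          - (∑ s, ∑ a, marg d0 P pol t s a * R s a)
          - γ * ∑ s, ∑ a, marg d0 P pol t s a * K s a := by
      have e : ∀ (s : S) (a : A), marg d0 P pol t s a * (Q s a - (R s a + γ * K s a))
          = marg d0 P pol t s a * Q s a - marg d0 P pol t s a * R s a
            - γ * (marg d0 P pol t s a * K s a) := by intro s a; ring
      simp only [e, Finset.sum_sub_distrib, ← Finset.mul_sum]
    rw [expand]
    have e2 : ∑ s, ∑ a, marg d0 P pol t s a * K s a
        = ∑ s', ∑ a', marg d0 P pol (t+1) s' a' * Q s' a' := hs.symm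
    rw [e2]
    simp only [hAv, hB, pow_succ]
    ring
  have h0 := Summable.tsum_eq_zero_add hAs
  rw [tsum_congr hterm, Summable.tsum_sub (hAs.sub hBs) hA1, Summable.tsum_sub hAs hBs]
  have hA0 : Av 0 = ∑ s, ∑ a, marg d0 P pol 0 s a * Q s a := by simp [hAv]
  linarith

end aux3

section aux4
variable {S A : Type*} [Fintype S] [Fintype A]
variable {γ : ℝ} {d0 : S → ℝ} {P : S → A → S → ℝ} {pol : S → A → ℝ}

lemma occ_nonneg (hγ1 : γ < 1) (hγ0 : 0 ≤ γ) (hd0 : ∀ s, 0 ≤ d0 s)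
    (hP : ∀ s a s', 0 ≤ P s a s') (hpol : ∀ s a, 0 ≤ pol s a) (s : S) (a : A) :
    0 ≤ occ γ d0 P pol s a :=
  mul_nonneg (by linarith) (tsum_nonneg fun t =>
    mul_nonneg (pow_nonneg hγ0 t) (marg_nonneg hd0 hP hpol t s a))

lemma occ_sum (hγ0 : 0 ≤ γ) (hγ1 : γ < 1) (hd0 : ∀ s, 0 ≤ d0 s)
    (hP : ∀ s a s', 0 ≤ P s a s') (hpol : ∀ s a, 0 ≤ pol s a)
    (hd0sum : ∑ s, d0 s = 1) (hPsum : ∀ s a, ∑ s', P s a s' = 1)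
    (hpolsum : ∀ s, ∑ a, pol s a = 1) (h : S → A → ℝ) :
    ∑ s, ∑ a, occ γ d0 P pol s a * h s a
      = (1 - γ) * ∑' t : ℕ, γ^t * ∑ s, ∑ a, marg d0 P pol t s a * h s a := by
  have hsum1 : ∀ (s : S) (a : A), Summable (fun t : ℕ => γ^t * marg d0 P pol t s a * h s a) := by
    intro s a
    apply Summable.of_norm_bounded (g := fun t : ℕ => γ^t * |h s a|)
      ((summable_geometric_of_lt_one hγ0 hγ1).mul_right _)
    intro t
    rw [Real.norm_eq_abs, abs_mul, abs_mul, abs_pow, abs_of_nonneg hγ0,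
      abs_of_nonneg (marg_nonneg hd0 hP hpol t s a)]
    have h1 := marg_le_one hd0 hP hpol hd0sum hPsum hpolsum t s a
    have := mul_le_mul_of_nonneg_right
      (mul_le_mul_of_nonneg_left h1 (pow_nonneg hγ0 t)) (abs_nonneg (h s a))
    simpa using this
  calc ∑ s, ∑ a, occ γ d0 P pol s a * h s a
      = ∑ s, ∑ a, (1-γ) * ∑' t : ℕ, γ^t * marg d0 P pol t s a * h s a := by
        refine Finset.sum_congr rfl fun s _ => Finset.sum_congr rfl fun a _ => ?_
        rw [occ, mul_assoc, ← tsum_mul_right]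
    _ = (1-γ) * ∑ s, ∑ a, ∑' t : ℕ, γ^t * marg d0 P pol t s a * h s a := by
        simp only [← Finset.mul_sum]
    _ = (1-γ) * ∑' t : ℕ, ∑ s, ∑ a, γ^t * marg d0 P pol t s a * h s a := by
        congr 1
        have h1 : ∀ s : S, ∑ a, ∑' t : ℕ, γ^t * marg d0 P pol t s a * h s a
            = ∑' t : ℕ, ∑ a, γ^t * marg d0 P pol t s a * h s a :=
          fun s => (Summable.tsum_finsetSum (fun a _ => hsum1 s a)).symm
        simp only [h1]
        exact (Summable.tsum_finsetSum (fun s _ => summable_sum (fun a _ => hsum1 s a))).symm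
    _ = (1-γ) * ∑' t : ℕ, γ^t * ∑ s, ∑ a, marg d0 P pol t s a * h s a := by
        congr 1
        refine tsum_congr fun t => ?_
        simp only [Finset.mul_sum, mul_assoc]

lemma cs_bound (μ w h : S → A → ℝ) (hμ : ∀ s a, 0 < μ s a) (hw : ∀ s a, 0 ≤ w s a) :
    ∑ s, ∑ a, w s a * |h s a|
      ≤ Real.sqrt (∑ s, ∑ a, μ s a * (w s a / μ s a)^2) *
        Real.sqrt (∑ s, ∑ a, μ s a * h s a ^ 2) := by
  set F : S × A → ℝ := fun p => Real.sqrt (μ p.1 p.2) * (w p.1 p.2 / μ p.1 p.2) with hF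
  set G : S × A → ℝ := fun p => Real.sqrt (μ p.1 p.2) * |h p.1 p.2| with hG
  have hFG : ∀ p : S × A, F p * G p = w p.1 p.2 * |h p.1 p.2| := by
    intro p
    have hm : Real.sqrt (μ p.1 p.2) * Real.sqrt (μ p.1 p.2) = μ p.1 p.2 :=
      Real.mul_self_sqrt (hμ p.1 p.2).le
    have hc : μ p.1 p.2 * (w p.1 p.2 / μ p.1 p.2) = w p.1 p.2 := by
      rw [mul_comm, div_mul_cancel₀ _ (hμ p.1 p.2).ne']
    calc F p * G p
        = (Real.sqrt (μ p.1 p.2) * Real.sqrt (μ p.1 p.2)) * (w p.1 p.2 / μ p.1 p.2)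
            * |h p.1 p.2| := by simp only [hF, hG]; ring
      _ = (μ p.1 p.2 * (w p.1 p.2 / μ p.1 p.2)) * |h p.1 p.2| := by rw [hm]
      _ = w p.1 p.2 * |h p.1 p.2| := by rw [hc]
  have hF2 : ∀ p : S × A, F p ^ 2 = μ p.1 p.2 * (w p.1 p.2 / μ p.1 p.2)^2 := by
    intro p; rw [hF, mul_pow, Real.sq_sqrt (hμ p.1 p.2).le]
  have hG2 : ∀ p : S × A, G p ^ 2 = μ p.1 p.2 * h p.1 p.2 ^ 2 := by
    intro p; rw [hG, mul_pow, Real.sq_sqrt (hμ p.1 p.2).le, sq_abs]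
  have key := Finset.sum_mul_sq_le_sq_mul_sq Finset.univ F G
  have hL : ∑ s, ∑ a, w s a * |h s a| = ∑ p : S × A, F p * G p := by
    rw [Fintype.sum_prod_type]; simp only [hFG]
  have hnn : 0 ≤ ∑ p : S × A, F p * G p := by
    rw [← hL]
    exact Finset.sum_nonneg fun s _ => Finset.sum_nonneg fun a _ =>
      mul_nonneg (hw s a) (abs_nonneg _)
  rw [hL]
  have := Real.sqrt_le_sqrt key
  rw [Real.sqrt_sq hnn, Real.sqrt_mul (Finset.sum_nonneg fun p _ => sq_nonneg (F p))] at this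
  calc ∑ p : S × A, F p * G p
      ≤ Real.sqrt (∑ p : S × A, F p ^ 2) * Real.sqrt (∑ p : S × A, G p ^ 2) := this
    _ = _ := by
        rw [Fintype.sum_prod_type, Fintype.sum_prod_type]
        simp only [hF2, hG2]

end aux4

section aux5
variable {S A : Type*} [Fintype S] [Fintype A]
variable {γ : ℝ} {d0 : S → ℝ} {P : S → A → S → ℝ} {pol : S → A → ℝ}

lemma detPol_sum [DecidableEq A] (g0 : S → A) (f : A → ℝ) (s : S) :
    ∑ a, detPol g0 s a * f a = f (g0 s) := by
  simp [detPol, ite_mul]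

lemma detPol_nonneg [DecidableEq A] (g0 : S → A) (s : S) (a : A) : 0 ≤ detPol g0 s a := by
  unfold detPol; split <;> norm_num

lemma detPol_sum_one [DecidableEq A] (g0 : S → A) (s : S) : ∑ a, detPol g0 s a = 1 := by
  simp [detPol]

lemma tsum_marg_mono (hγ0 : 0 ≤ γ) (hγ1 : γ < 1) (hd0 : ∀ s, 0 ≤ d0 s)
    (hP : ∀ s a s', 0 ≤ P s a s') (hpol : ∀ s a, 0 ≤ pol s a)
    (hd0sum : ∑ s, d0 s = 1) (hPsum : ∀ s a, ∑ s', P s a s' = 1)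
    (hpolsum : ∀ s, ∑ a, pol s a = 1) (h1 h2 : S → A → ℝ) (hle : ∀ s a, h1 s a ≤ h2 s a) :
    ∑' t : ℕ, γ^t * ∑ s, ∑ a, marg d0 P pol t s a * h1 s a
      ≤ ∑' t : ℕ, γ^t * ∑ s, ∑ a, marg d0 P pol t s a * h2 s a := by
  refine Summable.tsum_le_tsum (fun t => ?_)
    (summable_marg hγ0 hγ1 hd0 hP hpol hd0sum hPsum hpolsum h1)
    (summable_marg hγ0 hγ1 hd0 hP hpol hd0sum hPsum hpolsum h2)
  refine mul_le_mul_of_nonneg_left ?_ (pow_nonneg hγ0 t)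
  refine Finset.sum_le_sum fun s _ => Finset.sum_le_sum fun a _ =>
    mul_le_mul_of_nonneg_left (hle s a) (marg_nonneg hd0 hP hpol t s a)

end aux5


/-- MSBO policy-loss bound via the Bellman residual:
    `max_{π∈Π_Q} J(π) - J(π_Q̂) ≤ (2√C_eff/(1-γ)) ‖Q̂ - TQ̂‖_{2,μ}`. -/
theorem stmt11 {S A ι : Type*} [Fintype S] [Fintype A] [Nonempty A] [DecidableEq A]
    [Fintype ι] [Nonempty ι]
    (γ : ℝ) (hγ0 : 0 ≤ γ) (hγ1 : γ < 1)
    (d0 : S → ℝ) (hd0 : ∀ s, 0 ≤ d0 s) (hd0sum : ∑ s, d0 s = 1)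
    (P : S → A → S → ℝ) (hP : ∀ s a s', 0 ≤ P s a s') (hPsum : ∀ s a, ∑ s', P s a s' = 1)
    (R : S → A → ℝ) (Vmax : ℝ)
    (μ : S → A → ℝ) (hμ : ∀ s a, 0 < μ s a) (hμsum : ∑ s, ∑ a, μ s a = 1)
    (Qs : ι → S → A → ℝ) (hQs : ∀ i s a, Qs i s a ∈ Set.Icc (0 : ℝ) Vmax)
    (g : ι → S → A) (hg : ∀ i s a, Qs i s a ≤ Qs i s (g i s)) (i : ι)
    (Ceff : ℝ)
    (hCeff : Ceff = ⨆ j, ∑ s, ∑ a, μ s a * (occ γ d0 P (detPol (g j)) s a / μ s a) ^ 2) :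
    (⨆ j, Jret γ d0 P R (detPol (g j))) - Jret γ d0 P R (detPol (g i))
      ≤ (2 * Real.sqrt Ceff / (1 - γ)) *
        Real.sqrt (∑ s, ∑ a, μ s a * (Qs i s a - bellmanT γ P R (Qs i) s a) ^ 2) := by
  have hγ' : (0:ℝ) < 1 - γ := by linarith
  set Q : S → A → ℝ := Qs i with hQdef
  set resid : S → A → ℝ := fun s a => Q s a - bellmanT γ P R Q s a with hresid
  set E : ℝ := ∑ s, ∑ a, μ s a * resid s a ^ 2 with hE
  -- greedy supremum fact
  have hsup : ∀ s : S, (⨆ a', Q s a') = Q s (g i s) := fun s =>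
    le_antisymm (ciSup_le fun a => hg i s a)
      (le_ciSup (Set.Finite.bddAbove (Set.finite_range _)) (g i s))
  -- shorthand policy facts
  have hpolJ : ∀ j : ι, (∀ (s : S) (a : A), 0 ≤ detPol (g j) s a) ∧
      (∀ s : S, ∑ a, detPol (g j) s a = 1) :=
    fun j => ⟨detPol_nonneg (g j), detPol_sum_one (g j)⟩
  -- D and Dabs
  set D : ι → ℝ := fun j =>
    ∑' t : ℕ, γ^t * ∑ s, ∑ a, marg d0 P (detPol (g j)) t s a * resid s a with hD
  set Dabs : ι → ℝ := fun j =>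
    ∑' t : ℕ, γ^t * ∑ s, ∑ a, marg d0 P (detPol (g j)) t s a * |resid s a| with hDabs
  -- telescope consequences
  have hJ : ∀ j : ι, Jret γ d0 P R (detPol (g j))
      ≤ (∑ s, ∑ a, marg d0 P (detPol (g j)) 0 s a * Q s a) - D j := by
    intro j
    have htel := telescope hγ0 hγ1 hd0 hP (hpolJ j).1 hd0sum hPsum (hpolJ j).2 R Q
    have hTle : ∀ (s : S) (a : A),
        resid s a ≤ Q s a - (R s a + γ * ∑ s', P s a s' * ∑ a', detPol (g j) s' a' * Q s' a') := by
      intro s a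
      have : (R s a + γ * ∑ s', P s a s' * ∑ a', detPol (g j) s' a' * Q s' a')
          ≤ bellmanT γ P R Q s a := by
        unfold bellmanT
        refine add_le_add_right (mul_le_mul_of_nonneg_left ?_ hγ0) _
        refine Finset.sum_le_sum fun s' _ => mul_le_mul_of_nonneg_left ?_ (hP s a s')
        rw [detPol_sum (g j) (Q s') s']
        exact le_ciSup (Set.Finite.bddAbove (Set.finite_range _)) (g j s')
      simp only [hresid]
      linarith
    have hmono := tsum_marg_mono hγ0 hγ1 hd0 hP (hpolJ j).1 hd0sum hPsum (hpolJ j).2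
      resid (fun s a => Q s a - (R s a + γ * ∑ s', P s a s' * ∑ a', detPol (g j) s' a' * Q s' a'))
      hTle
    have hJdef : Jret γ d0 P R (detPol (g j))
        = ∑' t : ℕ, γ^t * ∑ s, ∑ a, marg d0 P (detPol (g j)) t s a * R s a := rfl
    rw [hJdef]
    have := htel
    simp only [hD]
    linarith [hmono.trans_eq htel]
  have hJi : Jret γ d0 P R (detPol (g i))
      = (∑ s, ∑ a, marg d0 P (detPol (g i)) 0 s a * Q s a) - D i := by
    have htel := telescope hγ0 hγ1 hd0 hP (hpolJ i).1 hd0sum hPsum (hpolJ i).2 R Q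
    have heq : ∀ (s : S) (a : A),
        Q s a - (R s a + γ * ∑ s', P s a s' * ∑ a', detPol (g i) s' a' * Q s' a')
          = resid s a := by
      intro s a
      have hx : (∑ s', P s a s' * ∑ a', detPol (g i) s' a' * Q s' a')
          = ∑ s', P s a s' * ⨆ a', Q s' a' := by
        refine Finset.sum_congr rfl fun s' _ => ?_
        rw [detPol_sum (g i) (Q s') s', hsup s']
      simp only [hresid]
      unfold bellmanT
      rw [hx]
    simp only [heq] at htel
    have hJdef : Jret γ d0 P R (detPol (g i))
        = ∑' t : ℕ, γ^t * ∑ s, ∑ a, marg d0 P (detPol (g i)) t s a * R s a := rfl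
    simp only [hD]
    rw [hJdef]
    linarith [htel]
  -- initial expectation comparison
  have hE0 : ∀ j : ι, (∑ s, ∑ a, marg d0 P (detPol (g j)) 0 s a * Q s a)
      ≤ ∑ s, ∑ a, marg d0 P (detPol (g i)) 0 s a * Q s a := by
    intro j
    have hform : ∀ k : ι, (∑ s, ∑ a, marg d0 P (detPol (g k)) 0 s a * Q s a)
        = ∑ s, d0 s * Q s (g k s) := by
      intro k
      refine Finset.sum_congr rfl fun s _ => ?_
      have : ∀ a, marg d0 P (detPol (g k)) 0 s a * Q s a
          = d0 s * (detPol (g k) s a * Q s a) := by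
        intro a; simp only [marg]; ring
      simp only [this, ← Finset.mul_sum, detPol_sum (g k) (Q s) s]
    rw [hform j, hform i]
    exact Finset.sum_le_sum fun s _ => mul_le_mul_of_nonneg_left (hg i s (g j s)) (hd0 s)
  -- |D| ≤ Dabs
  have habs : ∀ j : ι, D j ≤ Dabs j ∧ -Dabs j ≤ D j := by
    intro j
    constructor
    · exact tsum_marg_mono hγ0 hγ1 hd0 hP (hpolJ j).1 hd0sum hPsum (hpolJ j).2
        resid (fun s a => |resid s a|) (fun s a => le_abs_self _)
    · have := tsum_marg_mono hγ0 hγ1 hd0 hP (hpolJ j).1 hd0sum hPsum (hpolJ j).2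
        (fun s a => -|resid s a|) resid (fun s a => neg_abs_le _)
      simp only [mul_neg, Finset.sum_neg_distrib, tsum_neg] at this
      exact this
  -- Dabs bound via occupancy and Cauchy-Schwarz
  have hDabsBound : ∀ j : ι, Dabs j ≤ Real.sqrt Ceff * Real.sqrt E / (1 - γ) := by
    intro j
    have hocc := occ_sum hγ0 hγ1 hd0 hP (hpolJ j).1 hd0sum hPsum (hpolJ j).2
      (fun s a => |resid s a|)
    have hcs := cs_bound μ (occ γ d0 P (detPol (g j))) resid hμ
      (occ_nonneg hγ1 hγ0 hd0 hP (hpolJ j).1)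
    have hCj : (∑ s, ∑ a, μ s a * (occ γ d0 P (detPol (g j)) s a / μ s a) ^ 2) ≤ Ceff := by
      rw [hCeff]
      exact le_ciSup (f := fun j : ι => ∑ s, ∑ a, μ s a * (occ γ d0 P (detPol (g j)) s a / μ s a) ^ 2)
        (Finite.bddAbove_range _) j
    have hsq : Real.sqrt (∑ s, ∑ a, μ s a * (occ γ d0 P (detPol (g j)) s a / μ s a) ^ 2)
        ≤ Real.sqrt Ceff := Real.sqrt_le_sqrt hCj
    have hkey : (1 - γ) * Dabs j ≤ Real.sqrt Ceff * Real.sqrt E := by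
      calc (1 - γ) * Dabs j
          = ∑ s, ∑ a, occ γ d0 P (detPol (g j)) s a * |resid s a| := by
            rw [hocc]
        _ ≤ Real.sqrt (∑ s, ∑ a, μ s a * (occ γ d0 P (detPol (g j)) s a / μ s a) ^ 2) *
              Real.sqrt E := hcs
        _ ≤ Real.sqrt Ceff * Real.sqrt E :=
            mul_le_mul_of_nonneg_right hsq (Real.sqrt_nonneg _)
    rw [le_div_iff₀ hγ']
    linarith [hkey]
  -- conclude
  rw [sub_le_iff_le_add]
  refine ciSup_le fun j => ?_
  have h1 := hJ j
  have h2 := hJi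
  have h3 := hE0 j
  have h4 := (habs i).1
  have h5 := (habs j).2
  have h6 := hDabsBound i
  have h7 := hDabsBound j
  have hfin : Jret γ d0 P R (detPol (g j)) - Jret γ d0 P R (detPol (g i))
      ≤ 2 * (Real.sqrt Ceff * Real.sqrt E / (1 - γ)) := by linarith
  have hring : (2 * Real.sqrt Ceff / (1 - γ)) * Real.sqrt E
      = 2 * (Real.sqrt Ceff * Real.sqrt E / (1 - γ)) := by ring
  rw [hring]
  linarith
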